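/- The watchman number of the de Bruijn graph G(a,k) equals a^{k-1}, for any alphabet size a ≥ 2 and any k ≥ 2. That is, the minimum length of a closed directed walk that dominates all vertices of G(a,k) is exactly a^{k-1}. -/

import Mathlib

/-- Arc of the de Bruijn graph `G(a,k)`: there is an arc from `x` to `y` iff
`y` is obtained from `x` by a left shift (the first `k-1` symbols of `y` are
the last `k-1` symbols of `x`). -/
def dbArc (a k : ℕ) (x y : Fin k → Fin a) : Prop :=
  ∀ (i : ℕ) (h : i + 1 < k), y ⟨i, Nat.lt_of_succ_lt h⟩ = x ⟨i + 1, h⟩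

/-- A closed directed walk of length `n` in a digraph with adjacency `Adj`,
encoded as an `n`-periodic sequence of vertices with consecutive arcs. -/
def IsClosedWalk {V : Type*} (Adj : V → V → Prop) (n : ℕ) (w : ℕ → V) : Prop :=
  0 < n ∧ (∀ i, w (i + n) = w i) ∧ ∀ i, Adj (w i) (w (i + 1))

/-- The walk `w` dominates the digraph: every vertex lies on the walk or is an
out-neighbour of a vertex on the walk. -/
def Dominates {V : Type*} (Adj : V → V → Prop) (w : ℕ → V) : Prop :=
  ∀ v, (∃ i, w i = v) ∨ ∃ i, Adj (w i) v

set_option linter.unusedSectionVars false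
set_option maxHeartbeats 1000000


namespace DBW
variable {E C : Type*} [DecidableEq E] [DecidableEq C] (c d : E → C)

/-- A closed trail: nodup list, consecutive composable, and last composes with head. -/
def Trail (l : List E) : Prop :=
  l.Nodup ∧ l.Chain' (fun p q => c p = d q) ∧
    ∀ x ∈ l.getLast?, ∀ y ∈ l.head?, c x = d y

lemma count_chain (x : C) (l : List E) (e : E)
    (h : (e :: l).Chain' (fun p q => c p = d q)) :
    (e :: l).countP (fun f => c f = x) + (if d e = x then 1 else 0) =
    (e :: l).countP (fun f => d f = x) +
      (if c ((e :: l).getLast (List.cons_ne_nil e l)) = x then 1 else 0) := by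
  induction l generalizing e with
  | nil =>
    simp only [List.countP_cons, List.countP_nil, List.getLast_singleton]
    split_ifs <;> simp_all
  | cons f t ih =>
    rw [List.Chain', List.isChain_cons_cons] at h
    have h1 : c e = d f := h.1
    have h2 := ih f h.2
    simp only [List.countP_cons] at h2 ⊢
    have hg : (e :: f :: t).getLast (List.cons_ne_nil e (f :: t)) =
        (f :: t).getLast (List.cons_ne_nil f t) := rfl
    rw [hg]
    simp only [decide_eq_true_eq] at h2 ⊢
    have hce : (if c e = x then 1 else 0) = (if d f = x then 1 else 0) := by
      rw [h1]
    omega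

end DBW

set_option linter.unusedSectionVars false

namespace DBW2
open DBW
variable {E C : Type*} [DecidableEq E] [DecidableEq C] (c d : E → C)

lemma count_closed (l : List E) (hc : l.Chain' (fun p q => c p = d q))
    (hcl : ∀ x ∈ l.getLast?, ∀ y ∈ l.head?, c x = d y) (x : C) :
    l.countP (fun f => c f = x) = l.countP (fun f => d f = x) := by
  cases l with
  | nil => rfl
  | cons e t =>
    have h := count_chain c d x t e hc
    have hcl' : c ((e :: t).getLast (List.cons_ne_nil e t)) = d e := by
      apply hcl
      · exact (List.getLast?_eq_getLast _).symm ▸ rfl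
      · rfl
    rw [hcl'] at h
    omega

lemma countP_toFinset (l : List E) (hn : l.Nodup) (p : E → Prop) [DecidablePred p] :
    (l.toFinset.filter p).card = l.countP (fun e => p e) := by
  have h1 : l.toFinset.filter p = (l.filter (fun e => decide (p e))).toFinset := by
    ext a; simp
  rw [h1, List.toFinset_card_of_nodup (hn.filter _), List.countP_eq_length_filter]

lemma exists_next [Fintype E]
    (hbal : ∀ y, (Finset.univ.filter fun e => c e = y).card =
      (Finset.univ.filter fun e => d e = y).card)
    (U : Finset E)
    (hU : ∀ y, (U.filter fun e => c e = y).card = (U.filter fun e => d e = y).card)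
    (l : List E) (hne : l ≠ []) (hn : l.Nodup)
    (hc : l.Chain' (fun p q => c p = d q))
    (hdU : ∀ e ∈ l, e ∉ U)
    (hnc : ¬ (c (l.getLast hne) = d (l.head hne))) :
    ∃ e', e' ∉ U ∧ e' ∉ l ∧ d e' = c (l.getLast hne) := by
  classical
  set x := c (l.getLast hne) with hx
  set lt := l.toFinset with hlt
  set rest := Finset.univ \ (U ∪ lt) with hrest
  have hdisj : Disjoint U lt := by
    rw [Finset.disjoint_right]
    intro e he
    exact hdU e (List.mem_toFinset.mp he)
  have key : ∀ p : E → Prop, ∀ _ : DecidablePred p,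
      (Finset.univ.filter p).card =
        (U.filter p).card + (lt.filter p).card + (rest.filter p).card := by
    intro p _
    have h1 : ((U ∪ lt).filter p).card = (U.filter p).card + (lt.filter p).card := by
      rw [Finset.filter_union, Finset.card_union_of_disjoint
        (Finset.disjoint_filter_filter hdisj)]
    have h2 : rest.filter p = (Finset.univ.filter p) \ ((U ∪ lt).filter p) := by
      ext e
      simp only [hrest, Finset.mem_filter, Finset.mem_sdiff, Finset.mem_univ, true_and]
      tauto
    have h3 : (U ∪ lt).filter p ⊆ Finset.univ.filter p :=
      Finset.filter_subset_filter _ (Finset.subset_univ _)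
    have h4 := Finset.card_sdiff_add_card_eq_card h3
    rw [← h2] at h4
    omega
  -- count on the list
  have hlcount : l.countP (fun f => c f = x) = l.countP (fun f => d f = x) + 1 := by
    cases l with
    | nil => exact absurd rfl hne
    | cons e t =>
      have h := count_chain c d x t e hc
      have hhead : (e :: t).head (List.cons_ne_nil e t) = e := rfl
      rw [hhead] at hnc
      have : (if d e = x then 1 else 0) = 0 := by
        rw [if_neg (fun h' => hnc (hx ▸ h'.symm))]
      rw [this, if_pos rfl] at h
      omega
  have hcfin : (lt.filter fun e => c e = x).card = l.countP (fun f => c f = x) :=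
    countP_toFinset _ hn _
  have hdfin : (lt.filter fun e => d e = x).card = l.countP (fun f => d f = x) :=
    countP_toFinset _ hn _
  have kc := key (fun e => c e = x) (by infer_instance)
  have kd := key (fun e => d e = x) (by infer_instance)
  have hb := hbal x
  have hUx := hU x
  have hpos : 0 < (rest.filter fun e => d e = x).card := by omega
  obtain ⟨e', he'⟩ := Finset.card_pos.mp hpos
  simp only [Finset.mem_filter, hrest, hlt, Finset.mem_sdiff, Finset.mem_univ, true_and,
    Finset.mem_union, not_or, List.mem_toFinset] at he'
  exact ⟨e', he'.1.1, he'.1.2, he'.2⟩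

end DBW2

namespace DBW3
open DBW DBW2
variable {E C : Type*} [DecidableEq E] [DecidableEq C] (c d : E → C)

lemma closed_of (l : List E) (hne : l ≠ []) (h : c (l.getLast hne) = d (l.head hne)) :
    ∀ x ∈ l.getLast?, ∀ y ∈ l.head?, c x = d y := by
  intro x hx y hy
  rw [List.getLast?_eq_getLast_of_ne_nil hne, Option.mem_some_iff] at hx
  rw [List.head?_eq_head hne, Option.mem_some_iff] at hy
  subst hx; subst hy; exact h

lemma extend [Fintype E]
    (hbal : ∀ y, (Finset.univ.filter fun e => c e = y).card =
      (Finset.univ.filter fun e => d e = y).card)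
    (U : Finset E)
    (hU : ∀ y, (U.filter fun e => c e = y).card = (U.filter fun e => d e = y).card) :
    ∀ (n : ℕ) (l : List E) (_ : l ≠ []), Fintype.card E ≤ l.length + n →
      l.Nodup → l.Chain' (fun p q => c p = d q) → (∀ e ∈ l, e ∉ U) →
      ∃ l', l <+: l' ∧ l' ≠ [] ∧ Trail c d l' ∧ ∀ e ∈ l', e ∉ U := by
  intro n
  induction n with
  | zero =>
    intro l hne hcard hn hc hdU
    by_cases hcl : c (l.getLast hne) = d (l.head hne)
    · exact ⟨l, List.prefix_refl l, hne, ⟨hn, hc, closed_of c d l hne hcl⟩, hdU⟩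
    · exfalso
      obtain ⟨e', _, he'l, _⟩ := exists_next c d hbal U hU l hne hn hc hdU hcl
      have h1 : l.toFinset = Finset.univ := by
        apply Finset.eq_univ_of_card
        rw [List.toFinset_card_of_nodup hn]
        have hlen : l.length ≤ Fintype.card E := by
          rw [← List.toFinset_card_of_nodup hn]
          simpa using Finset.card_le_univ l.toFinset
        omega
      exact he'l (List.mem_toFinset.mp (h1 ▸ Finset.mem_univ e'))
  | succ n ih =>
    intro l hne hcard hn hc hdU
    by_cases hcl : c (l.getLast hne) = d (l.head hne)
    · exact ⟨l, List.prefix_refl l, hne, ⟨hn, hc, closed_of c d l hne hcl⟩, hdU⟩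
    · obtain ⟨e', he'U, he'l, he'd⟩ := exists_next c d hbal U hU l hne hn hc hdU hcl
      have hn' : (l ++ [e']).Nodup := by
        rw [List.nodup_append]
        exact ⟨hn, List.nodup_singleton e', by
          intro a ha b hb hab
          simp only [List.mem_singleton] at hb
          subst hb; subst hab; exact he'l ha⟩
      have hc' : (l ++ [e']).Chain' (fun p q => c p = d q) := by
        rw [List.Chain', List.isChain_append]
        refine ⟨hc, List.isChain_singleton e', ?_⟩
        intro x hx y hy
        rw [List.getLast?_eq_getLast_of_ne_nil hne, Option.mem_some_iff] at hx
        simp only [List.head?_cons, Option.mem_some_iff] at hy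
        subst hx; subst hy; exact he'd.symm
      obtain ⟨l', hp, h2, h3, h4⟩ := ih (l ++ [e']) (by simp) (by simp; omega) hn' hc'
        (by intro e he
            rcases List.mem_append.mp he with h | h
            · exact hdU e h
            · simp only [List.mem_singleton] at h; exact h ▸ he'U)
      exact ⟨l', (List.prefix_append l [e']).trans hp, h2, h3, h4⟩

lemma trail_rotate (l₁ l₂ : List E) (h : Trail c d (l₁ ++ l₂)) : Trail c d (l₂ ++ l₁) := by
  obtain ⟨hn, hc, hcl⟩ := h
  rcases eq_or_ne l₁ [] with rfl | h1
  · simpa using ⟨hn, hc, hcl⟩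
  rcases eq_or_ne l₂ [] with rfl | h2
  · simp only [List.append_nil] at hn hc hcl ⊢
    exact ⟨hn, hc, hcl⟩
  rw [List.Chain', List.isChain_append] at hc
  refine ⟨List.nodup_append_comm.mp hn, ?_, ?_⟩
  · rw [List.Chain', List.isChain_append]
    refine ⟨hc.2.1, hc.1, ?_⟩
    intro x hx y hy
    exact hcl x (by rw [List.getLast?_append_of_ne_nil _ h2]; exact hx)
      y (by rw [List.head?_append_of_ne_nil _ h1]; exact hy)
  · intro x hx y hy
    rw [List.getLast?_append_of_ne_nil _ h1] at hx
    rw [List.head?_append_of_ne_nil _ h2] at hy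
    exact hc.2.2 x hx y hy

lemma cross {l : List E} {x y : E} (h : Relation.ReflTransGen (fun p q => c p = d q) x y)
    (hx : x ∉ l) : y ∈ l → ∃ u v, u ∉ l ∧ v ∈ l ∧ c u = d v := by
  induction h with
  | refl => intro hy; exact absurd hy hx
  | tail _ hbc ih =>
    rename_i b c' _
    intro hy
    by_cases hb : b ∈ l
    · exact ih hb
    · exact ⟨b, c', hb, hy, hbc⟩

end DBW3

namespace DBW4
open DBW DBW2 DBW3
variable {E C : Type*} [DecidableEq E] [DecidableEq C] (c d : E → C)

theorem euler [Fintype E] [Nonempty E]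
    (hbal : ∀ y, (Finset.univ.filter fun e => c e = y).card =
      (Finset.univ.filter fun e => d e = y).card)
    (hconn : ∀ e e' : E, Relation.ReflTransGen (fun p q => c p = d q) e e') :
    ∃ l : List E, Trail c d l ∧ l ≠ [] ∧ ∀ e : E, e ∈ l := by
  classical
  set P : ℕ → Prop := fun n => 0 < n ∧ ∃ l : List E, l.length = n ∧ Trail c d l with hP
  have nodup_len : ∀ l : List E, l.Nodup → l.length ≤ Fintype.card E := by
    intro l hn
    rw [← List.toFinset_card_of_nodup hn]
    simpa using Finset.card_le_univ l.toFinset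
  obtain ⟨e₀⟩ := ‹Nonempty E›
  obtain ⟨l₀, hp₀, hne₀, ht₀, -⟩ := extend c d hbal ∅ (by simp) (Fintype.card E) [e₀]
    (by simp) (by simp) (List.nodup_singleton _) (List.isChain_singleton _) (by simp)
  have hP₀ : P l₀.length := ⟨List.length_pos_iff.mpr hne₀, l₀, rfl, ht₀⟩
  set n₀ := Nat.findGreatest P (Fintype.card E) with hn₀
  obtain ⟨hpos, l, hllen, ht⟩ := Nat.findGreatest_spec (nodup_len l₀ ht₀.1) hP₀
  have hne : l ≠ [] := by
    intro h; rw [h] at hllen; simp at hllen; omega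
  refine ⟨l, ht, hne, ?_⟩
  by_contra hnot
  push_neg at hnot
  obtain ⟨e, he⟩ := hnot
  have hUl : ∀ y, (l.toFinset.filter fun f => c f = y).card =
      (l.toFinset.filter fun f => d f = y).card := by
    intro y
    rw [countP_toFinset l ht.1, countP_toFinset l ht.1]
    exact count_closed c d l ht.2.1 ht.2.2 y
  obtain ⟨u, v, hu, hv, huv⟩ := cross c d (hconn e (l.head hne)) he (List.head_mem hne)
  obtain ⟨p, q, hl⟩ := List.append_of_mem hv
  obtain ⟨m, hmp, hmne, hmt, hmU⟩ := extend c d hbal l.toFinset hUl (Fintype.card E) [u]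
    (by simp) (by simp) (List.nodup_singleton _) (List.isChain_singleton _)
    (by simp [List.mem_toFinset, hu])
  obtain ⟨t, hm⟩ := hmp
  have ht₁ : Trail c d ((v :: q) ++ p) := by
    apply trail_rotate
    rw [← hl]; exact ht
  have hmt₁ : Trail c d (t ++ [u]) := by
    apply trail_rotate
    rw [hm]; exact hmt
  have hmemm : ∀ a, a ∈ t ++ [u] → a ∉ (v :: q) ++ p := by
    intro a ha hb
    have ha' : a ∈ m := by
      rw [← hm]; simp only [List.mem_append, List.mem_singleton, List.mem_cons] at ha ⊢; tauto
    have hbl : a ∈ l := by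
      rw [hl]; simp only [List.mem_append, List.mem_singleton, List.mem_cons] at hb ⊢; tauto
    have hnl : a ∉ l := by simpa using hmU a ha'
    exact hnl hbl
  have hTL : Trail c d ((t ++ [u]) ++ ((v :: q) ++ p)) := by
    refine ⟨?_, ?_, ?_⟩
    · rw [List.nodup_append]
      exact ⟨hmt₁.1, ht₁.1, fun a ha b hb hab => hmemm a ha (hab ▸ hb)⟩
    · rw [List.Chain', List.isChain_append]
      refine ⟨hmt₁.2.1, ht₁.2.1, ?_⟩
      intro x hx y hy
      rw [List.getLast?_concat, Option.mem_some_iff] at hx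
      simp only [List.cons_append, List.head?_cons, Option.mem_some_iff] at hy
      subst hx; subst hy; exact huv
    · intro x hx y hy
      have h2ne : (v :: q) ++ p ≠ [] := by simp
      have h1ne : t ++ [u] ≠ [] := by simp
      rw [List.getLast?_append_of_ne_nil _ h2ne] at hx
      rw [List.head?_append_of_ne_nil _ h1ne] at hy
      have e1 : c x = d v := ht₁.2.2 x hx v (by simp)
      have e2 : c u = d y := hmt₁.2.2 u
        (show u ∈ (t ++ [u]).getLast? by rw [List.getLast?_concat]; rfl) y hy
      rw [e1, ← huv, e2]
  have hLlen : ((t ++ [u]) ++ ((v :: q) ++ p)).length = l.length + m.length := by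
    have h1 : l.length = p.length + (q.length + 1) := by rw [hl]; simp
    have h2 : m.length = t.length + 1 := by rw [← hm]; simp
    simp only [List.length_append, List.length_cons, List.length_singleton,
      List.length_nil]
    omega
  have hmlen : 1 ≤ m.length := by rw [← hm]; simp
  have hPL : P (((t ++ [u]) ++ ((v :: q) ++ p)).length) :=
    ⟨by omega, _, rfl, hTL⟩
  have hbound : ((t ++ [u]) ++ ((v :: q) ++ p)).length ≤ Fintype.card E :=
    nodup_len _ hTL.1
  have hfin : l.length < ((t ++ [u]) ++ ((v :: q) ++ p)).length := by omega
  rw [hllen] at hfin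
  exact Nat.findGreatest_is_greatest hfin hbound hPL

end DBW4

namespace DBW5
open DBW DBW2 DBW3 DBW4

lemma fin_congr {α : Type*} {n : ℕ} (f : Fin n → α) {A B : ℕ} (hA : A < n) (hB : B < n)
    (h : A = B) : f ⟨A, hA⟩ = f ⟨B, hB⟩ := by subst h; rfl

lemma fin_eta {α : Type*} {n : ℕ} (f : Fin n → α) (j : Fin n) {A : ℕ} (hA : A < n)
    (h : A = j.val) : f ⟨A, hA⟩ = f j := by
  cases j; subst h; rfl

lemma ham (a m : ℕ) (ha : 1 ≤ a) (hm : 1 ≤ m) :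
    ∃ u : ℕ → Fin m → Fin a,
      (∀ i, u (i + a ^ m) = u i) ∧ (∀ i, dbArc a m (u i) (u (i + 1))) ∧
      ∀ v : Fin m → Fin a, ∃ i, u i = v := by
  classical
  have hane : Nonempty (Fin a) := ⟨⟨0, ha⟩⟩
  set c : (Fin m → Fin a) → (Fin (m - 1) → Fin a) :=
    fun e j => e ⟨j.val + 1, by omega⟩ with hc
  set d : (Fin m → Fin a) → (Fin (m - 1) → Fin a) :=
    fun e j => e ⟨j.val, by omega⟩ with hd
  have hR : ∀ e e', (c e = d e') ↔ dbArc a m e e' := by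
    intro e e'
    constructor
    · intro h i hi
      have := congrFun h ⟨i, by omega⟩
      simpa [hc, hd] using this.symm
    · intro h
      funext j
      have := h j.val (by omega)
      simpa [hc, hd] using this.symm
  have cardc : ∀ x, (Finset.univ.filter fun e => c e = x).card = a := by
    intro x
    have key : (Finset.univ.filter fun e => c e = x).card =
        (Finset.univ : Finset (Fin a)).card := by
      refine Finset.card_bij' (fun e _ => e ⟨0, by omega⟩)
        (fun s _ => fun j => if h : j.val = 0 then s else x ⟨j.val - 1, by omega⟩)
        ?_ ?_ ?_ ?_
      · intro e _; exact Finset.mem_univ _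
      · intro s _
        simp only [Finset.mem_filter, Finset.mem_univ, true_and]
        funext j
        simp only [hc]
        rw [dif_neg (by omega)]
        exact fin_eta x j _ (by omega)
      · intro e he
        simp only [Finset.mem_filter, Finset.mem_univ, true_and] at he
        funext j
        by_cases h0 : j.val = 0
        · rw [dif_pos h0]
          exact fin_eta e j _ h0.symm
        · rw [dif_neg h0]
          have := congrFun he ⟨j.val - 1, by omega⟩
          simp only [hc] at this
          rw [← this]
          exact fin_eta e j _ (by omega)
      · intro s _; simp
    rw [key, Finset.card_univ, Fintype.card_fin]
  have cardd : ∀ x, (Finset.univ.filter fun e => d e = x).card = a := by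
    intro x
    have key : (Finset.univ.filter fun e => d e = x).card =
        (Finset.univ : Finset (Fin a)).card := by
      refine Finset.card_bij' (fun e _ => e ⟨m - 1, by omega⟩)
        (fun s _ => fun j => if h : j.val < m - 1 then x ⟨j.val, h⟩ else s)
        ?_ ?_ ?_ ?_
      · intro e _; exact Finset.mem_univ _
      · intro s _
        simp only [Finset.mem_filter, Finset.mem_univ, true_and]
        funext j
        simp only [hd]
        rw [dif_pos (by omega)]
      · intro e he
        simp only [Finset.mem_filter, Finset.mem_univ, true_and] at he
        funext j
        by_cases h0 : j.val < m - 1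
        · rw [dif_pos h0]
          have := congrFun he ⟨j.val, h0⟩
          simp only [hd] at this
          rw [← this]
        · rw [dif_neg h0]
          exact fin_eta e j _ (by omega)
      · intro s _; simp
    rw [key, Finset.card_univ, Fintype.card_fin]
  have hbal : ∀ y, (Finset.univ.filter fun e => c e = y).card =
      (Finset.univ.filter fun e => d e = y).card := by
    intro y; rw [cardc, cardd]
  have hconn : ∀ e e' : Fin m → Fin a,
      Relation.ReflTransGen (fun p q => c p = d q) e e' := by
    intro e e'
    set blend : ℕ → Fin m → Fin a := fun n j =>
      if h : j.val + n < m then e ⟨j.val + n, h⟩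
      else e' ⟨(j.val + n - m) % m, Nat.mod_lt _ (by omega)⟩
      with hblend
    have hb0 : blend 0 = e := by
      funext j
      simp only [hblend]
      rw [dif_pos (by omega)]
      exact fin_eta e j _ (by omega)
    have hbm : blend m = e' := by
      funext j
      simp only [hblend]
      rw [dif_neg (by omega)]
      exact fin_eta e' j _ (by
        have : j.val + m - m = j.val := by omega
        rw [this, Nat.mod_eq_of_lt j.isLt])
    have hstep : ∀ n, c (blend n) = d (blend (n + 1)) := by
      intro n
      funext j
      simp only [hblend, hc, hd]
      by_cases h1 : j.val + 1 + n < m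
      · rw [dif_pos h1, dif_pos (by omega)]
        exact fin_congr e _ _ (by omega)
      · rw [dif_neg h1, dif_neg (by omega)]
        exact fin_congr e' _ _ (by congr 1; omega)
    have hrtg : ∀ n, Relation.ReflTransGen (fun p q => c p = d q) e (blend n) := by
      intro n
      induction n with
      | zero => rw [hb0]
      | succ n ih => exact ih.tail (hstep n)
    have := hrtg m
    rwa [hbm] at this
  obtain ⟨l, ht, hlne, hall⟩ := euler c d hbal hconn
  have hN : l.length = a ^ m := by
    have h1 : l.toFinset = Finset.univ := Finset.eq_univ_iff_forall.mpr
      (fun e => List.mem_toFinset.mpr (hall e))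
    have h2 := List.toFinset_card_of_nodup ht.1
    rw [h1] at h2
    rw [← h2, Finset.card_univ, Fintype.card_fun, Fintype.card_fin, Fintype.card_fin]
  have hNpos : 0 < l.length := List.length_pos_iff.mpr hlne
  refine ⟨fun i => l.get ⟨i % l.length, Nat.mod_lt _ hNpos⟩, ?_, ?_, ?_⟩
  · intro i
    dsimp only
    exact fin_congr l.get _ _ (by rw [← hN]; exact Nat.add_mod_right _ _)
  · intro i
    dsimp only
    rw [← hR]
    set r := i % l.length with hrdef
    have hr : r < l.length := Nat.mod_lt _ hNpos
    have hsucc : (i + 1) % l.length = (r + 1) % l.length := by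
      rw [hrdef, Nat.mod_add_mod]
    by_cases hcase : r + 1 < l.length
    · have h1 : (i + 1) % l.length = r + 1 := by
        rw [hsucc]; exact Nat.mod_eq_of_lt hcase
      have hchain := List.isChain_iff_getElem.mp ht.2.1 r (by omega)
      have e2 : l.get ⟨(i + 1) % l.length, Nat.mod_lt _ hNpos⟩ =
          l.get ⟨r + 1, by omega⟩ := fin_congr l.get _ _ h1
      rw [e2]
      exact hchain
    · have hrN : r + 1 = l.length := by omega
      have h1 : (i + 1) % l.length = 0 := by
        rw [hsucc, hrN, Nat.mod_self]
      have hmem1 : l.getLast hlne ∈ l.getLast? := by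
        rw [List.getLast?_eq_getLast_of_ne_nil hlne]; rfl
      have hmem2 : l.head hlne ∈ l.head? := by
        rw [List.head?_eq_head hlne]; rfl
      have hcl := ht.2.2 (l.getLast hlne) hmem1 (l.head hlne) hmem2
      have hg1 : l.get ⟨r, hr⟩ = l.getLast hlne := by
        rw [List.getLast_eq_getElem, List.get_eq_getElem]
        exact getElem_congr rfl (show r = l.length - 1 by omega) _
      have hg2 : l.get ⟨(i + 1) % l.length, Nat.mod_lt _ hNpos⟩ = l.head hlne := by
        rw [List.head_eq_getElem, List.get_eq_getElem]
        exact getElem_congr rfl h1 _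
      rw [hg1, hg2]
      exact hcl
  · intro v
    obtain ⟨n, hn⟩ := List.mem_iff_get.mp (hall v)
    refine ⟨n.val, ?_⟩
    rw [← hn]
    exact fin_eta l.get n _ (Nat.mod_eq_of_lt n.isLt)

end DBW5

/-- The watchman number of `G(a,k)` equals `a^(k-1)`: the minimum length of a
closed dominating walk is exactly `a^(k-1)`. -/
theorem deBruijn_watchmanNumber (a k : ℕ) (ha : 2 ≤ a) (hk : 2 ≤ k) :
    IsLeast {n : ℕ | ∃ w : ℕ → Fin k → Fin a,
      IsClosedWalk (dbArc a k) n w ∧ Dominates (dbArc a k) w} (a ^ (k - 1)) := by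
  have hN1 : 1 ≤ a ^ (k - 1) := Nat.one_le_pow _ _ (by omega)
  constructor
  · -- membership: the de Bruijn walk
    obtain ⟨u, hper, harc, hsurj⟩ := DBW5.ham a (k - 1) (by omega) (by omega)
    refine ⟨fun i j => if h : (j : ℕ) < k - 1 then u i ⟨(j : ℕ), h⟩
      else u (i + 1) ⟨k - 2, by omega⟩, ⟨by omega, ?_, ?_⟩, ?_⟩
    · intro i
      funext j
      dsimp only
      by_cases h : (j : ℕ) < k - 1
      · rw [dif_pos h, dif_pos h, hper]
      · rw [dif_neg h, dif_neg h,
          show i + a ^ (k - 1) + 1 = (i + 1) + a ^ (k - 1) by omega, hper]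
    · intro i i' h
      dsimp only
      rw [dif_pos (show i' < k - 1 by omega)]
      by_cases h2 : i' + 1 < k - 1
      · rw [dif_pos h2]
        exact harc i i' h2
      · rw [dif_neg h2]
        exact DBW5.fin_congr (u (i + 1)) _ _ (by omega)
    · intro v
      right
      obtain ⟨i, hi⟩ := hsurj (fun j => v ⟨(j : ℕ), by omega⟩)
      refine ⟨i + a ^ (k - 1) - 1, ?_⟩
      have hiN : i + a ^ (k - 1) - 1 + 1 = i + a ^ (k - 1) := by omega
      intro i' h
      dsimp only
      by_cases h2 : i' + 1 < k - 1
      · rw [dif_pos h2]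
        rw [← harc (i + a ^ (k - 1) - 1) i' h2, hiN, hper, hi]
      · rw [dif_neg h2, hiN, hper, hi]
        exact DBW5.fin_congr v _ _ (by show i' = k - 2; omega)
  · -- lower bound
    rintro n ⟨w, ⟨hn, hper, harc⟩, hdom⟩
    classical
    have hmul : ∀ q r, w (r + n * q) = w r := by
      intro q
      induction q with
      | zero => intro r; simp
      | succ q ih =>
        intro r
        rw [Nat.mul_succ, ← Nat.add_assoc, hper, ih]
    have hmod : ∀ i, w (i % n) = w i := by
      intro i
      have := hmul (i / n) (i % n)
      rw [Nat.mod_add_div] at this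
      exact this.symm
    set σ : (Fin k → Fin a) → (Fin (k - 1) → Fin a) :=
      fun v j => v ⟨(j : ℕ) + 1, by omega⟩ with hσ
    have hπσ : ∀ i (j : Fin (k - 1)), w (i + 1) ⟨(j : ℕ), by omega⟩ = σ (w i) j := by
      intro i j
      exact harc i (j : ℕ) (by omega)
    have hS : ∀ p : Fin (k - 1) → Fin a, ∃ i < n, σ (w i) = p := by
      intro p
      set v : Fin k → Fin a :=
        fun j => if h : (j : ℕ) < k - 1 then p ⟨(j : ℕ), h⟩ else ⟨0, by omega⟩ with hv
      have hπv : ∀ j : Fin (k - 1), v ⟨(j : ℕ), by omega⟩ = p j := by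
        intro j
        simp only [hv]
        rw [dif_pos (by omega)]
      rcases hdom v with ⟨i, hi⟩ | ⟨i, hi⟩
      · refine ⟨(i + n - 1) % n, Nat.mod_lt _ hn, ?_⟩
        rw [hmod]
        funext j
        rw [← hπσ (i + n - 1) j, show i + n - 1 + 1 = i + n by omega, hper, hi]
        exact hπv j
      · refine ⟨i % n, Nat.mod_lt _ hn, ?_⟩
        rw [hmod]
        funext j
        exact ((hi (j : ℕ) (by omega)).symm).trans (hπv j)
    have himg : (Finset.range n).image (fun i => σ (w i)) = Finset.univ := by
      apply Finset.eq_univ_iff_forall.mpr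
      intro p
      obtain ⟨i, hin, hip⟩ := hS p
      exact Finset.mem_image.mpr ⟨i, Finset.mem_range.mpr hin, hip⟩
    calc a ^ (k - 1) = Fintype.card (Fin (k - 1) → Fin a) := by
          rw [Fintype.card_fun, Fintype.card_fin, Fintype.card_fin]
      _ = (Finset.univ : Finset (Fin (k - 1) → Fin a)).card := Finset.card_univ.symm
      _ = ((Finset.range n).image (fun i => σ (w i))).card := by rw [himg]
      _ ≤ (Finset.range n).card := Finset.card_image_le
      _ = n := Finset.card_range n
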